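/- Let (R, m) be a Noetherian local ring and let I and J be proper ideals of R such that the integral closure of I^a equals the integral closure of J^b for some positive integers a, b. If J has finite Łojasiewicz exponent, then so does I, and a·𝓛₀(I) = b·𝓛₀(J). -/

import Mathlib

open Finset IsLocalRing
open scoped Pointwise

/-- The set of elements integral over an ideal `I`: `x` is integral over `I` if it satisfies
an equation `x ^ k + c 1 * x ^ (k-1) + ⋯ + c k = 0` with `c i ∈ I ^ i`. -/
def integralClosureIdeal {R : Type*} [CommRing R] (I : Ideal R) : Set R :=
  {x | ∃ k : ℕ, 1 ≤ k ∧ ∃ c : ℕ → R, (∀ i, 1 ≤ i → i ≤ k → c i ∈ I ^ i) ∧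
    x ^ k + ∑ i ∈ Finset.Icc 1 k, c i * x ^ (k - i) = 0}

/-- `Λ(I)`: the set of rationals `r/s` (as real numbers) with `r, s` positive integers such that
`m ^ r` is contained in the integral closure of `I ^ s`. -/
def Lambda (R : Type*) [CommRing R] [IsLocalRing R] (I : Ideal R) : Set ℝ :=
  {x | ∃ r s : ℕ, 0 < r ∧ 0 < s ∧
    ((maximalIdeal R ^ r : Ideal R) : Set R) ⊆ integralClosureIdeal (I ^ s) ∧
    x = (r : ℝ) / (s : ℝ)}

/-- The Łojasiewicz exponent `𝓛₀(I)`, the infimum of `Λ(I)`. -/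
noncomputable def Loj (R : Type*) [CommRing R] [IsLocalRing R] (I : Ideal R) : ℝ :=
  sInf (Lambda R I)

namespace LojAux

variable {R : Type*} [CommRing R]

theorem add_le_ideal {A B C : Ideal R} (h1 : A ≤ C) (h2 : B ≤ C) : A + B ≤ C := by
  rw [Ideal.add_eq_sup]; exact sup_le h1 h2

theorem le_add_left_ideal {A B : Ideal R} : A ≤ A + B := by
  rw [Ideal.add_eq_sup]; exact le_sup_left

theorem le_add_right_ideal {A B : Ideal R} : B ≤ A + B := by
  rw [Ideal.add_eq_sup]; exact le_sup_right

theorem add_le_add_ideal {A B C D : Ideal R} (h1 : A ≤ C) (h2 : B ≤ D) : A + B ≤ C + D :=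
  add_le_ideal (h1.trans le_add_left_ideal) (h2.trans le_add_right_ideal)

/-- `B` is a "reduction extension" of `A`: `A ≤ B` and `B^(n+1) = A * B^n` for some `n`. -/
def Red (A B : Ideal R) : Prop := A ≤ B ∧ ∃ n : ℕ, B ^ (n + 1) = A * B ^ n

theorem Red.refl (A : Ideal R) : Red A A := ⟨le_rfl, 0, by simp⟩

theorem Red.pow_eq {A B : Ideal R} {n : ℕ} (hn : B ^ (n + 1) = A * B ^ n) :
    ∀ k : ℕ, B ^ (n + k) = A ^ k * B ^ n := by
  intro k
  induction k with
  | zero => simp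
  | succ k ih =>
    have e : B ^ (n + (k + 1)) = B * B ^ (n + k) := by ring
    rw [e, ih, show B * (A ^ k * B ^ n) = A ^ k * B ^ (n+1) by ring, hn]
    ring

theorem Red.trans {A B C : Ideal R} (h1 : Red A B) (h2 : Red B C) : Red A C := by
  obtain ⟨hle1, n, hn⟩ := h1
  obtain ⟨hle2, m, hm⟩ := h2
  refine ⟨hle1.trans hle2, m + n, ?_⟩
  have h3 : C ^ (m + (n + 1)) = B ^ (n + 1) * C ^ m := Red.pow_eq hm (n+1)
  have h4 : C ^ (m + n) = B ^ n * C ^ m := Red.pow_eq hm n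
  rw [show m + n + 1 = m + (n + 1) by ring, h3, hn, h4]
  ring

theorem Red.add {A B F : Ideal R} (h : Red A B) : Red (A + F) (B + F) := by
  obtain ⟨hle, n, hn⟩ := h
  have key : ∀ m : ℕ, B * (B + F) ^ m ≤ (A + F) * (B + F) ^ m + B ^ (m + 1) := by
    intro m
    induction m with
    | zero =>
      rw [pow_zero, mul_one, mul_one, zero_add, pow_one]
      exact le_add_right_ideal
    | succ m ih =>
      have h1 : B * (B + F) ^ (m + 1) = (B + F) * (B * (B + F) ^ m) := by ring
      rw [h1]
      calc (B + F) * (B * (B + F) ^ m)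
          ≤ (B + F) * ((A + F) * (B + F) ^ m + B ^ (m + 1)) :=
            Ideal.mul_mono_right ih
        _ = (A + F) * (B + F) ^ (m + 1) + (B * B ^ (m+1) + F * B ^ (m+1)) := by ring
        _ ≤ (A + F) * (B + F) ^ (m + 1) + B ^ (m + 1 + 1) := by
            refine add_le_ideal le_add_left_ideal (add_le_ideal ?_ ?_)
            · exact (le_of_eq (by ring)).trans le_add_right_ideal
            · refine le_trans ?_ le_add_left_ideal
              calc F * B ^ (m+1) ≤ F * (B + F) ^ (m+1) :=
                    Ideal.mul_mono_right (Ideal.pow_right_mono le_add_left_ideal _)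
                _ ≤ (A + F) * (B + F) ^ (m+1) :=
                    Ideal.mul_mono_left le_add_right_ideal
  refine ⟨add_le_add_ideal hle le_rfl, n, le_antisymm ?_ ?_⟩
  · have h2 : (B + F) ^ (n + 1) = B * (B + F) ^ n + F * (B + F) ^ n := by ring
    rw [h2]
    refine add_le_ideal ((key n).trans (add_le_ideal le_rfl ?_))
      (Ideal.mul_mono_left le_add_right_ideal)
    rw [hn]
    exact mul_le_mul' le_add_left_ideal (Ideal.pow_right_mono le_add_left_ideal _)
  · rw [pow_succ']
    exact Ideal.mul_mono_left (add_le_add_ideal hle le_rfl)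

theorem Red.mul {A B A' B' : Ideal R} (h : Red A B) (h' : Red A' B') :
    Red (A * A') (B * B') := by
  obtain ⟨hle, n, hn⟩ := h
  obtain ⟨hle', m, hm⟩ := h'
  refine ⟨mul_le_mul' hle hle', n + m, le_antisymm ?_ ?_⟩
  · have e1 : (B * B') ^ (n + m + 1) = B ^ (n + (m+1)) * B' ^ (m + (n+1)) := by
      rw [mul_pow]
      rw [show n + (m+1) = n + m + 1 by ring, show m + (n+1) = n + m + 1 by ring]
    rw [e1, Red.pow_eq hn (m+1), Red.pow_eq hm (n+1)]
    calc A ^ (m+1) * B ^ n * (A' ^ (n+1) * B' ^ m)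
        = (A * A') * (A ^ m * A' ^ n * B ^ n * B' ^ m) := by ring
      _ ≤ (A * A') * (B ^ m * B' ^ n * B ^ n * B' ^ m) := by
          refine Ideal.mul_mono_right
            (mul_le_mul' (mul_le_mul' (mul_le_mul' ?_ ?_) le_rfl) le_rfl)
          · exact Ideal.pow_right_mono hle _
          · exact Ideal.pow_right_mono hle' _
      _ = (A * A') * (B * B') ^ (n + m) := by rw [mul_pow]; ring
  · calc (A * A') * (B * B') ^ (n + m) ≤ (B * B') * (B * B') ^ (n + m) :=
        Ideal.mul_mono_left (mul_le_mul' hle hle')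
      _ = (B * B') ^ (n + m + 1) := by ring

theorem subset_cl {A : Ideal R} {x : R} (hx : x ∈ A) : x ∈ integralClosureIdeal A := by
  refine ⟨1, le_rfl, fun _ => -x, ?_, by simp⟩
  intro i h1 h2
  have : i = 1 := le_antisymm h2 h1
  subst this
  simpa using neg_mem hx

theorem cl_mono {A B : Ideal R} (h : A ≤ B) :
    integralClosureIdeal A ⊆ integralClosureIdeal B := by
  rintro x ⟨k, hk, c, hc, heq⟩
  exact ⟨k, hk, c, fun i h1 h2 => Ideal.pow_right_mono h i (hc i h1 h2), heq⟩

theorem red_of_mem_cl {A : Ideal R} {x : R} (hx : x ∈ integralClosureIdeal A) :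
    Red A (A + Ideal.span {x}) := by
  obtain ⟨k, hk, c, hc, heq⟩ := hx
  set X : Ideal R := Ideal.span {x} with hX
  set E : Ideal R := A + X with hE
  have hAE : A ≤ E := le_add_left_ideal
  have hXE : X ≤ E := le_add_right_ideal
  have claim1 : ∀ j : ℕ, X * E ^ j ≤ A * E ^ j + X ^ (j + 1) := by
    intro j
    induction j with
    | zero => rw [pow_zero, mul_one, mul_one, zero_add, pow_one]; exact le_add_right_ideal
    | succ j ih =>
      have e1 : X * E ^ (j + 1) = E * (X * E ^ j) := by ring
      rw [e1]
      calc E * (X * E ^ j) ≤ E * (A * E ^ j + X ^ (j + 1)) := Ideal.mul_mono_right ih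
        _ = A * E ^ (j + 1) + E * X ^ (j + 1) := by ring
        _ = A * E ^ (j + 1) + (A * X ^ (j + 1) + X * X ^ (j + 1)) := by
            rw [hE, add_mul]
        _ ≤ A * E ^ (j + 1) + X ^ (j + 1 + 1) := by
            refine add_le_ideal le_add_left_ideal (add_le_ideal ?_ ?_)
            · exact le_trans (Ideal.mul_mono_right (Ideal.pow_right_mono hXE _))
                le_add_left_ideal
            · exact le_trans (le_of_eq (by ring)) le_add_right_ideal
  have claim2 : X ^ k ≤ A * E ^ (k - 1) := by
    rw [hX, Ideal.span_singleton_pow, Ideal.span_singleton_le_iff_mem]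
    have hxk : x ^ k = -∑ i ∈ Finset.Icc 1 k, c i * x ^ (k - i) :=
      eq_neg_of_add_eq_zero_left heq
    rw [hxk]
    refine neg_mem (Ideal.sum_mem _ (fun i hi => ?_))
    rw [Finset.mem_Icc] at hi
    have h1 : c i ∈ A ^ i := hc i hi.1 hi.2
    have h2 : A ^ i * X ^ (k - i) ≤ A * E ^ (k - 1) := by
      have e2 : A ^ i = A * A ^ (i - 1) := by
        rw [← pow_succ']
        congr 1
        omega
      rw [e2, mul_assoc]
      refine Ideal.mul_mono_right ?_
      calc A ^ (i - 1) * X ^ (k - i) ≤ E ^ (i - 1) * E ^ (k - i) :=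
            mul_le_mul' (Ideal.pow_right_mono hAE _) (Ideal.pow_right_mono hXE _)
        _ = E ^ (k - 1) := by rw [← pow_add]; congr 1; omega
    exact h2 (Ideal.mul_mem_mul h1
      (Ideal.pow_mem_pow (Ideal.subset_span (Set.mem_singleton x)) _))
  refine ⟨hAE, k - 1, le_antisymm ?_ ?_⟩
  · have hk1 : k - 1 + 1 = k := by omega
    rw [hk1]
    have e3 : E ^ k = A * E ^ (k - 1) + X * E ^ (k - 1) := by
      conv_lhs => rw [← hk1, pow_succ', hE, add_mul]
    rw [e3]
    refine add_le_ideal le_rfl ((claim1 (k - 1)).trans (add_le_ideal le_rfl ?_))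
    rw [hk1]
    exact claim2
  · rw [pow_succ']
    exact Ideal.mul_mono_left hAE

variable [IsNoetherianRing R]

open Polynomial in
theorem mem_cl_of_red {A B : Ideal R} (h : Red A B) {x : R}
    (hx : x ∈ B) : x ∈ integralClosureIdeal A := by
  obtain ⟨hle, n, hn⟩ := h
  haveI : Module.Finite R ↥(B ^ n) := Module.Finite.iff_fg.mpr (IsNoetherian.noetherian _)
  set f : Module.End R ↥(B ^ n) := algebraMap R (Module.End R ↥(B ^ n)) x with hf
  have hrange : LinearMap.range f ≤ A • (⊤ : Submodule R ↥(B ^ n)) := by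
    rintro _ ⟨w, rfl⟩
    rw [Submodule.mem_smul_top_iff]
    have hcoe : ((f w : ↥(B ^ n)) : R) = x * (w : R) := by
      rw [hf, Module.algebraMap_end_apply]
      simp [smul_eq_mul]
    rw [hcoe, Ideal.smul_eq_mul, ← hn]
    rw [pow_succ']
    exact Ideal.mul_mem_mul hx w.2
  obtain ⟨p, hmonic, -, hcoeff, haeval⟩ :=
    LinearMap.exists_monic_and_coeff_mem_pow_and_aeval_eq_zero_of_range_le_smul R f A hrange
  have h0 : p.eval x * x ^ n = 0 := by
    rw [hf, Polynomial.aeval_algebraMap_apply_eq_algebraMap_eval] at haeval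
    have h1 := congrArg
      (fun g : Module.End R ↥(B ^ n) => ((g ⟨x ^ n, Ideal.pow_mem_pow hx n⟩ : ↥(B ^ n)) : R))
      haeval
    simpa [Module.algebraMap_end_apply, smul_eq_mul] using h1
  set d := p.natDegree with hd
  refine ⟨d + n + 1, by omega, fun i => if i ≤ d then p.coeff (d - i) else 0, ?_, ?_⟩
  · intro i h1 h2
    by_cases hid : i ≤ d
    · simp only [hid, if_true]
      have h3 := hcoeff (d - i)
      rwa [show p.natDegree - (d - i) = i by omega] at h3
    · simp only [hid, if_false]
      exact zero_mem _
  · have hx1 : p.eval x * x ^ (n + 1) = 0 := by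
      rw [pow_succ, ← mul_assoc, h0, zero_mul]
    have hsum : ∑ j ∈ Finset.range (d + 1), p.coeff j * x ^ (j + (n + 1)) = 0 := by
      calc ∑ j ∈ Finset.range (d + 1), p.coeff j * x ^ (j + (n + 1))
          = (∑ j ∈ Finset.range (d + 1), p.coeff j * x ^ j) * x ^ (n + 1) := by
            rw [Finset.sum_mul]
            exact Finset.sum_congr rfl (fun j _ => by rw [pow_add, mul_assoc])
        _ = p.eval x * x ^ (n + 1) := by rw [← Polynomial.eval_eq_sum_range]
        _ = 0 := hx1
    have hreflect : ∑ i ∈ Finset.range (d + 1), p.coeff (d - i) * x ^ (d + n + 1 - i)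
        = ∑ j ∈ Finset.range (d + 1), p.coeff j * x ^ (j + (n + 1)) := by
      rw [← Finset.sum_range_reflect (fun j => p.coeff j * x ^ (j + (n + 1))) (d + 1)]
      refine Finset.sum_congr rfl (fun i hi => ?_)
      rw [Finset.mem_range] at hi
      have e1 : d + 1 - 1 - i = d - i := by omega
      have e2 : d - i + (n + 1) = d + n + 1 - i := by omega
      rw [e1, e2]
    have hsplit : ∑ i ∈ Finset.range (d + 1), p.coeff (d - i) * x ^ (d + n + 1 - i)
        = p.coeff d * x ^ (d + n + 1) +
          ∑ i ∈ Finset.Icc 1 d, p.coeff (d - i) * x ^ (d + n + 1 - i) := by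
      rw [Finset.range_eq_Ico, Finset.sum_eq_sum_Ico_succ_bot (Nat.succ_pos d),
        Nat.succ_eq_add_one, Finset.Ico_add_one_right_eq_Icc]
      simp
    have hIcc : ∑ i ∈ Finset.Icc 1 (d + n + 1),
          (if i ≤ d then p.coeff (d - i) else 0) * x ^ (d + n + 1 - i)
        = ∑ i ∈ Finset.Icc 1 d, p.coeff (d - i) * x ^ (d + n + 1 - i) := by
      rw [← Finset.sum_subset (Finset.Icc_subset_Icc_right (by omega : d ≤ d + n + 1))]
      · refine Finset.sum_congr rfl (fun i hi => ?_)
        rw [Finset.mem_Icc] at hi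
        simp [hi.2]
      · intro i hi hni
        rw [Finset.mem_Icc] at hi
        have : ¬ i ≤ d := fun hc => hni (Finset.mem_Icc.mpr ⟨hi.1, hc⟩)
        simp [this]
    rw [hIcc, show x ^ (d + n + 1) = p.coeff d * x ^ (d + n + 1) by
      rw [hd, hmonic.coeff_natDegree, one_mul], ← hsplit, hreflect, hsum]

theorem cl_add {A : Ideal R} {x y : R} (hx : x ∈ integralClosureIdeal A)
    (hy : y ∈ integralClosureIdeal A) : x + y ∈ integralClosureIdeal A := by
  have r1 := red_of_mem_cl hx
  have r2 := red_of_mem_cl hy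
  set B1 : Ideal R := A + Ideal.span {x} with hB1
  set B2 : Ideal R := A + Ideal.span {y} with hB2
  have hAB2 : A ≤ B2 := le_add_left_ideal
  have r3 : Red (A + B2) (B1 + B2) := r1.add
  have e : A + B2 = B2 := by rw [Ideal.add_eq_sup, sup_eq_right]; exact hAB2
  rw [e] at r3
  refine mem_cl_of_red (r2.trans r3) (add_mem ?_ ?_)
  · exact le_add_left_ideal (le_add_right_ideal (Ideal.subset_span rfl))
  · exact le_add_right_ideal (le_add_right_ideal (Ideal.subset_span rfl))

theorem cl_mul {A B : Ideal R} {x y : R} (hx : x ∈ integralClosureIdeal A)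
    (hy : y ∈ integralClosureIdeal B) : x * y ∈ integralClosureIdeal (A * B) := by
  exact mem_cl_of_red ((red_of_mem_cl hx).mul (red_of_mem_cl hy))
    (Ideal.mul_mem_mul (le_add_right_ideal (Ideal.subset_span rfl))
      (le_add_right_ideal (Ideal.subset_span rfl)))

theorem le_cl_pow {K L : Ideal R} (h : (K : Set R) ⊆ integralClosureIdeal L) (n : ℕ) :
    ((K ^ n : Ideal R) : Set R) ⊆ integralClosureIdeal (L ^ n) := by
  induction n with
  | zero =>
    intro z _
    refine subset_cl ?_
    rw [pow_zero, Ideal.one_eq_top]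
    trivial
  | succ n ih =>
    intro z hz
    rw [SetLike.mem_coe, pow_succ] at hz
    rw [pow_succ]
    exact Submodule.mul_induction_on hz
      (fun m hm k hk => cl_mul (ih hm) (h hk))
      (fun u v hu hv => cl_add hu hv)

theorem red_add_span {L : Ideal R} (s : Finset R)
    (hs : ∀ g ∈ s, g ∈ integralClosureIdeal L) : Red L (L + Ideal.span (s : Set R)) := by
  classical
  induction s using Finset.induction_on with
  | empty =>
    rw [Finset.coe_empty, Ideal.span_empty, Ideal.add_eq_sup, sup_bot_eq]
    exact Red.refl L
  | @insert a t ha ih =>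
    have hs' : ∀ g ∈ t, g ∈ integralClosureIdeal L :=
      fun g hg => hs g (Finset.mem_insert_of_mem hg)
    have h1 : Red L (L + Ideal.span (t : Set R)) := ih hs'
    have h2 : a ∈ integralClosureIdeal (L + Ideal.span (t : Set R)) :=
      cl_mono le_add_left_ideal (hs a (Finset.mem_insert_self a t))
    have h3 := red_of_mem_cl h2
    have e : (L + Ideal.span (t : Set R)) + Ideal.span {a}
        = L + Ideal.span ((insert a t : Finset R) : Set R) := by
      rw [Finset.coe_insert, Ideal.span_insert, Ideal.add_eq_sup, Ideal.add_eq_sup,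
        Ideal.add_eq_sup, sup_assoc, sup_comm (Ideal.span (t : Set R)) (Ideal.span {a})]
    rw [e] at h3
    exact h1.trans h3

theorem cl_trans {K L : Ideal R} (h : (K : Set R) ⊆ integralClosureIdeal L) :
    integralClosureIdeal K ⊆ integralClosureIdeal L := by
  obtain ⟨s, hs⟩ := IsNoetherian.noetherian K
  have hs' : Ideal.span (s : Set R) = K := hs
  have redLK : Red L (L + K) := by
    rw [← hs']
    exact red_add_span s (fun g hg => h (hs' ▸ Ideal.subset_span hg))
  intro x hx
  have r1 := red_of_mem_cl hx
  have r2 : Red (K + L) ((K + Ideal.span {x}) + L) := r1.add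
  rw [add_comm K L] at r2
  refine mem_cl_of_red (redLK.trans r2) ?_
  exact le_add_left_ideal (le_add_right_ideal (Ideal.subset_span rfl))

theorem cl_pow_eq {A B : Ideal R} (h : integralClosureIdeal A = integralClosureIdeal B)
    (n : ℕ) : integralClosureIdeal (A ^ n) = integralClosureIdeal (B ^ n) := by
  have hAB : (A : Set R) ⊆ integralClosureIdeal B := fun z hz => h ▸ subset_cl hz
  have hBA : (B : Set R) ⊆ integralClosureIdeal A := fun z hz => h.symm ▸ subset_cl hz
  exact Set.Subset.antisymm (cl_trans (le_cl_pow hAB n)) (cl_trans (le_cl_pow hBA n))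

end LojAux

theorem loj_of_projEquiv
    {R : Type*} [CommRing R] [IsNoetherianRing R] [IsLocalRing R]
    (I J : Ideal R) (hI : I ≠ ⊤) (hJ : J ≠ ⊤) (a b : ℕ) (ha : 0 < a) (hb : 0 < b)
    (h : integralClosureIdeal (I ^ a) = integralClosureIdeal (J ^ b))
    (hJfin : (Lambda R J).Nonempty) :
    (Lambda R I).Nonempty ∧ (a : ℝ) * Loj R I = (b : ℝ) * Loj R J := by
  classical
  have EQ : ∀ n : ℕ, integralClosureIdeal (I ^ (a * n)) = integralClosureIdeal (J ^ (b * n)) := by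
    intro n
    have h1 := LojAux.cl_pow_eq h n
    rwa [← pow_mul, ← pow_mul] at h1
  have key : ∀ r s : ℕ,
      ((maximalIdeal R ^ r : Ideal R) : Set R) ⊆ integralClosureIdeal (J ^ s) →
      ((maximalIdeal R ^ (r * b) : Ideal R) : Set R) ⊆ integralClosureIdeal (I ^ (a * s)) := by
    intro r s hsub
    have h1 : ((maximalIdeal R ^ (r * b) : Ideal R) : Set R)
        ⊆ integralClosureIdeal ((J ^ s) ^ b) := by
      rw [pow_mul]
      exact LojAux.le_cl_pow hsub b
    rw [← pow_mul, show s * b = b * s by ring] at h1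
    rwa [← EQ s] at h1
  have key' : ∀ r s : ℕ,
      ((maximalIdeal R ^ r : Ideal R) : Set R) ⊆ integralClosureIdeal (I ^ s) →
      ((maximalIdeal R ^ (r * a) : Ideal R) : Set R) ⊆ integralClosureIdeal (J ^ (b * s)) := by
    intro r s hsub
    have h1 : ((maximalIdeal R ^ (r * a) : Ideal R) : Set R)
        ⊆ integralClosureIdeal ((I ^ s) ^ a) := by
      rw [pow_mul]
      exact LojAux.le_cl_pow hsub a
    rw [← pow_mul, show s * a = a * s by ring] at h1
    rwa [EQ s] at h1
  have ha' : (a : ℝ) ≠ 0 := Nat.cast_ne_zero.mpr ha.ne'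
  have hb' : (b : ℝ) ≠ 0 := Nat.cast_ne_zero.mpr hb.ne'
  have hIJ : ∀ x ∈ Lambda R J, ((b : ℝ) / a) * x ∈ Lambda R I := by
    rintro x ⟨r, s, hr, hs, hsub, rfl⟩
    refine ⟨r * b, a * s, Nat.mul_pos hr hb, Nat.mul_pos ha hs, key r s hsub, ?_⟩
    have hs' : (s : ℝ) ≠ 0 := Nat.cast_ne_zero.mpr hs.ne'
    push_cast
    field_simp
  have hJI : ∀ x ∈ Lambda R I, ((a : ℝ) / b) * x ∈ Lambda R J := by
    rintro x ⟨r, s, hr, hs, hsub, rfl⟩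
    refine ⟨r * a, b * s, Nat.mul_pos hr ha, Nat.mul_pos hb hs, key' r s hsub, ?_⟩
    have hs' : (s : ℝ) ≠ 0 := Nat.cast_ne_zero.mpr hs.ne'
    push_cast
    field_simp
  have hne : (Lambda R I).Nonempty := by
    obtain ⟨x, hx⟩ := hJfin
    exact ⟨_, hIJ x hx⟩
  refine ⟨hne, ?_⟩
  have hset : Lambda R I = ((b : ℝ) / a) • Lambda R J := by
    ext x
    constructor
    · intro hx
      refine ⟨((a : ℝ) / b) * x, hJI x hx, ?_⟩
      simp only [smul_eq_mul]
      field_simp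
    · rintro ⟨y, hy, rfl⟩
      simp only [smul_eq_mul]
      exact hIJ y hy
  rw [Loj, Loj, hset, Real.sInf_smul_of_nonneg (by positivity), smul_eq_mul]
  field_simp
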